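/- Let A be an abelian category (in which the Ext-groups Extⁿ are defined), and let Q be an object of A. If the functor Ext¹(Q, −) is right exact, i.e. for every epimorphism f : X → Y in A the induced map Ext¹(Q, X) → Ext¹(Q, Y) is surjective, then Ext²(Q, N) = 0 for every object N of A. -/

import Mathlib

open CategoryTheory Abelian Limits

universe w v u

namespace ExtTwoVanishAux

variable {A : Type u} [Category.{v} A] [CategoryTheory.Abelian A] [HasExt.{w} A]

/-- Every degree 2 Ext class can be erased by a monomorphism. -/
lemma erasable {Q N : A} (e : Ext Q N 2) :
    ∃ (E : A) (i : N ⟶ E), Mono i ∧ e.comp (Ext.mk₀ i) (add_zero 2) = 0 := by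
  letI := HasDerivedCategory.standard A
  let W := HomotopyCategory.quasiIso A (ComplexShape.up ℤ)
  haveI hWfrac : W.HasRightCalculusOfFractions := by
    show (HomotopyCategory.quasiIso A (ComplexShape.up ℤ)).HasRightCalculusOfFractions
    rw [HomotopyCategory.quasiIso_eq_subcategoryAcyclic_W]
    infer_instance
  -- the isomorphism `((single 0).obj M)⟦2⟧ ≅ (single (-2)).obj M`
  let ι : ∀ (M : A), ((DerivedCategory.singleFunctor A 0).obj M)⟦(2 : ℤ)⟧ ≅
      (DerivedCategory.singleFunctor A (-2)).obj M := fun M =>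
    ((DerivedCategory.singleFunctors A).shiftIso 2 (-2) 0 (by norm_num)).app M
  let ψ : DerivedCategory.Qh.obj ((HomotopyCategory.singleFunctor A 0).obj Q) ⟶
      DerivedCategory.Qh.obj ((HomotopyCategory.singleFunctor A (-2)).obj N) :=
    (e.hom ≫ (ι N).hom :
      (DerivedCategory.singleFunctor A 0).obj Q ⟶ (DerivedCategory.singleFunctor A (-2)).obj N)
  obtain ⟨φ, hφ⟩ := Localization.exists_rightFraction DerivedCategory.Qh W ψ
  -- lift the fraction to cochain complexes
  let Z : CochainComplex A ℤ := φ.X'.as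
  obtain ⟨s', hs'⟩ := (HomotopyCategory.quotient A (ComplexShape.up ℤ)).map_surjective
    (show (HomotopyCategory.quotient A (ComplexShape.up ℤ)).obj Z ⟶
      (HomotopyCategory.quotient A (ComplexShape.up ℤ)).obj
        ((CochainComplex.singleFunctor A 0).obj Q) from φ.s)
  replace hs' : (HomotopyCategory.quotient A (ComplexShape.up ℤ)).map s' = φ.s := hs'
  obtain ⟨g', hg'⟩ := (HomotopyCategory.quotient A (ComplexShape.up ℤ)).map_surjective
    (show (HomotopyCategory.quotient A (ComplexShape.up ℤ)).obj Z ⟶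
      (HomotopyCategory.quotient A (ComplexShape.up ℤ)).obj
        ((CochainComplex.singleFunctor A (-2)).obj N) from φ.f)
  replace hg' : (HomotopyCategory.quotient A (ComplexShape.up ℤ)).map g' = φ.f := hg'
  -- `s'` is a quasi-isomorphism
  haveI hs'q : QuasiIso s' := by
    rw [← HomologicalComplex.mem_quasiIso_iff,
      ← HomotopyCategory.quotient_map_mem_quasiIso_iff, hs']
    exact φ.hs
  -- `Z` is exact at `-2`
  have hQex : ((CochainComplex.singleFunctor A 0).obj Q).ExactAt (-2) :=
    HomologicalComplex.exactAt_single_obj _ _ _ _ (by norm_num)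
  have hZex : Z.ExactAt (-2) := (quasiIsoAt_iff_exactAt' s' (-2) hQex).1 inferInstance
  have hrel1 : (ComplexShape.up ℤ).Rel (-3) (-2) := by
    rw [ComplexShape.up_Rel]; norm_num
  have hrel2 : (ComplexShape.up ℤ).Rel (-2) (-1) := by
    rw [ComplexShape.up_Rel]; norm_num
  let S2 := Z.sc' (-3) (-2) (-1)
  have hS2 : S2.Exact := (Z.exactAt_iff' (-3) (-2) (-1)
    ((ComplexShape.up ℤ).prev_eq' hrel1) ((ComplexShape.up ℤ).next_eq' hrel2)).1 hZex
  -- the map `u : Z.X (-2) ⟶ N`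
  let u : Z.X (-2) ⟶ N := g'.f (-2) ≫
    (HomologicalComplex.singleObjXSelf (ComplexShape.up ℤ) (-2) N).hom
  have hu : S2.f ≫ u = 0 := by
    have hc := g'.comm (-3) (-2)
    have hd0 : ((CochainComplex.singleFunctor A (-2)).obj N).d (-3) (-2) = 0 :=
      (HomologicalComplex.isZero_single_obj_X
        (ComplexShape.up ℤ) (-2) N (-3) (by norm_num)).eq_of_src _ _
    have : Z.d (-3) (-2) ≫ g'.f (-2) = 0 := by
      rw [← hc, hd0, comp_zero]
    show Z.d (-3) (-2) ≫ u = 0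
    exact (Category.assoc _ _ _).symm.trans ((this =≫ _).trans zero_comp)
  -- the pushout construction
  let ub : S2.opcycles ⟶ N := S2.descOpcycles u hu
  let db : S2.opcycles ⟶ Z.X (-1) := S2.fromOpcycles
  haveI : Mono db := hS2.mono_fromOpcycles
  let E : A := pushout ub db
  let i : N ⟶ E := pushout.inl ub db
  haveI : Mono i := mono_pushout_of_mono_g ub db
  have key : u ≫ pushout.inl ub db = Z.d (-2) (-1) ≫ pushout.inr ub db := by
    have h1 : S2.pOpcycles ≫ ub = u := S2.p_descOpcycles u hu
    have h2 : S2.pOpcycles ≫ db = Z.d (-2) (-1) := S2.p_fromOpcycles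
    rw [← h1, ← h2]
    exact (Category.assoc _ _ _).trans ((S2.pOpcycles ≫= pushout.condition).trans (Category.assoc _ _ _).symm)
  -- the null-homotopy
  let ci : (CochainComplex.singleFunctor A (-2)).obj N ⟶
      (CochainComplex.singleFunctor A (-2)).obj E := (CochainComplex.singleFunctor A (-2)).map i
  let T := (CochainComplex.singleFunctor A (-2)).obj E
  let η : Z.X (-1) ⟶ T.X (-2) := pushout.inr ub db ≫
    (HomologicalComplex.singleObjXSelf (ComplexShape.up ℤ) (-2) E).inv
  let hnull : ∀ (p q : ℤ), (ComplexShape.up ℤ).Rel q p → (Z.X p ⟶ T.X q) := fun p q hpq =>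
    if hq : q = (-2 : ℤ) then
      (Z.XIsoOfEq (show p = (-1 : ℤ) by
        rw [ComplexShape.up_Rel] at hpq; omega)).hom ≫ η ≫
        (T.XIsoOfEq (show (-2 : ℤ) = q from hq.symm)).hom
    else 0
  have heq : g' ≫ ci = Homotopy.nullHomotopicMap' hnull := by
    ext p
    by_cases hp : p = (-2 : ℤ)
    · subst hp
      rw [Homotopy.nullHomotopicMap'_f hrel1 hrel2]
      have hz1 : hnull (-2) (-3) hrel1 = 0 := dif_neg (by norm_num)
      have hz2 : hnull (-1) (-2) hrel2 =
          (Z.XIsoOfEq rfl).hom ≫ η ≫ (T.XIsoOfEq rfl).hom := dif_pos rfl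
      rw [hz1, hz2, zero_comp, add_zero, HomologicalComplex.XIsoOfEq_rfl,
        HomologicalComplex.XIsoOfEq_rfl]
      simp only [Iso.refl_hom, Category.id_comp, Category.comp_id]
      show g'.f (-2) ≫ ci.f (-2) = Z.d (-2) (-1) ≫ η
      have hci : ci.f (-2) =
          (HomologicalComplex.singleObjXSelf (ComplexShape.up ℤ) (-2) N).hom ≫ i ≫
          (HomologicalComplex.singleObjXSelf (ComplexShape.up ℤ) (-2) E).inv :=
        HomologicalComplex.single_map_f_self (ComplexShape.up ℤ) (-2) i
      rw [hci]
      show _ = Z.d (-2) (-1) ≫ pushout.inr ub db ≫ _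
      have key' := key =≫ (HomologicalComplex.singleObjXSelf (ComplexShape.up ℤ) (-2) E).inv
      simp only [u, Category.assoc] at key'
      exact (Category.assoc _ _ _).symm.trans key'
    · apply (HomologicalComplex.isZero_single_obj_X
        (ComplexShape.up ℤ) (-2) E p hp).eq_of_tgt
  have hH : Homotopy (g' ≫ ci) 0 := heq ▸ Homotopy.nullHomotopy' hnull
  have hquot : (HomotopyCategory.quotient A (ComplexShape.up ℤ)).map (g' ≫ ci) = 0 := by
    rw [HomotopyCategory.eq_of_homotopy _ _ hH, Functor.map_zero]
  -- conclude in the derived category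
  haveI : IsIso (DerivedCategory.Qh.map φ.s) :=
    Localization.inverts DerivedCategory.Qh W _ φ.hs
  have hψi : ψ ≫ (DerivedCategory.singleFunctor A (-2)).map i = 0 := by
    rw [hφ, ← cancel_epi (DerivedCategory.Qh.map φ.s), comp_zero]
    refine (Category.assoc _ _ _).symm.trans ?_
    rw [MorphismProperty.RightFraction.map_s_comp_map]
    have hmapi : (DerivedCategory.singleFunctor A (-2)).map i =
        DerivedCategory.Qh.map ((HomotopyCategory.quotient A (ComplexShape.up ℤ)).map ci) := rfl
    rw [hmapi, ← hg']
    exact (DerivedCategory.Qh.map_comp _ _).symm.trans ((congrArg DerivedCategory.Qh.map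
      (((HomotopyCategory.quotient A (ComplexShape.up ℤ)).map_comp g' ci).symm.trans hquot)).trans
      (Functor.map_zero _ _ _))
  refine ⟨E, i, inferInstance, ?_⟩
  apply Ext.ext
  rw [Ext.comp_hom, Ext.mk₀_hom, Ext.zero_hom, ShiftedHom.comp_mk₀]
  have hnat := ((DerivedCategory.singleFunctors A).shiftIso 2 (-2) 0 (by norm_num)).hom.naturality i
  have h2 : ((2 : ℕ) : ℤ) = (2 : ℤ) := by norm_num
  have hnat' : ((DerivedCategory.singleFunctor A 0).map i)⟦(2 : ℤ)⟧' ≫ (ι E).hom =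
      (ι N).hom ≫ (DerivedCategory.singleFunctor A (-2)).map i := hnat
  have hshift : ((DerivedCategory.singleFunctor A 0).map i)⟦(2 : ℤ)⟧' =
      ((ι N).hom ≫ (DerivedCategory.singleFunctor A (-2)).map i) ≫ (ι E).inv := by
    rw [← hnat', Category.assoc, Iso.hom_inv_id, Category.comp_id]
  have : e.hom ≫ ((DerivedCategory.singleFunctor A 0).map i)⟦((2 : ℕ) : ℤ)⟧' = 0 := by
    show e.hom ≫ ((DerivedCategory.singleFunctor A 0).map i)⟦(2 : ℤ)⟧' = 0
    rw [hshift, ← Category.assoc, ← Category.assoc]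
    have h0 : (e.hom ≫ (ι N).hom) ≫ (DerivedCategory.singleFunctor A (-2)).map i = 0 := hψi
    rw [h0, zero_comp]
  exact this

end ExtTwoVanishAux

open CategoryTheory Abelian

/-- Let `A` be an abelian category (with Ext groups defined). If `Ext¹(Q, -)` is right
exact, i.e. for every epimorphism `f : X ⟶ Y` the induced map
`Ext¹(Q, X) → Ext¹(Q, Y)` is surjective, then `Ext²(Q, N) = 0` for every object `N`. -/
theorem ext_two_vanishes_of_ext_one_right_exact
    {A : Type u} [Category.{v} A] [CategoryTheory.Abelian A] [HasExt.{w} A] (Q : A)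
    (h : ∀ (X Y : A) (f : X ⟶ Y), Epi f →
      Function.Surjective (fun e : Ext Q X 1 => e.comp (Ext.mk₀ f) (add_zero 1))) :
    ∀ N : A, ∀ e : Ext Q N 2, e = 0 := by
  intro N e
  obtain ⟨E, i, hi, hei⟩ := ExtTwoVanishAux.erasable e
  haveI : Mono i := hi
  -- the short exact sequence `0 ⟶ N ⟶ E ⟶ coker i ⟶ 0`
  let S : ShortComplex A := ShortComplex.mk i (Limits.cokernel.π i) (by simp)
  have hS : S.ShortExact :=
    { exact := S.exact_of_g_is_cokernel (Limits.cokernelIsCokernel i)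
      mono_f := hi
      epi_g := by dsimp [S]; infer_instance }
  -- since `i∗ e = 0`, `e` comes from `Ext Q (coker i) 1` via the connecting map
  obtain ⟨x₃, hx₃⟩ := Abelian.Ext.covariant_sequence_exact₁ Q hS e hei rfl
  -- by right exactness, `x₃` lifts to `Ext Q E 1`
  obtain ⟨y, hy⟩ := h S.X₂ S.X₃ S.g hS.epi_g x₃
  simp only at hy
  rw [← hx₃, ← hy, Ext.comp_assoc_of_second_deg_zero, hS.comp_extClass, Ext.comp_zero]
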